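/- If X is an abelian (n,r,c)-drackn, then every odd prime dividing r also divides n. -/

import Mathlib

/-- Distance-regular antipodal cover of a complete graph with fibre map `π`,
fibre size `r` and parameter `c`. -/
def IsDracknCover {V ι : Type*} [Fintype V] [Fintype ι] (X : SimpleGraph V)
    (π : V → ι) (r c : ℕ) : Prop :=
  (∀ i : ι, Nat.card {v : V // π v = i} = r) ∧
  (∀ u v : V, X.Adj u v → π u ≠ π v) ∧
  (∀ (u : V) (i : ι), π u ≠ i → ∃! v : V, π v = i ∧ X.Adj u v) ∧
  (∀ u v : V, u ≠ v → (π u = π v ↔ X.dist u v = 3)) ∧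
  (∀ u v : V, X.dist u v = 2 → Nat.card {w : V // X.Adj u w ∧ X.Adj v w} = c)

open Finset SimpleGraph

set_option linter.unusedSectionVars false
set_option linter.unusedVariables false
set_option maxHeartbeats 1000000

namespace DracknAux



variable {n : ℕ} {G : Type*} [CommGroup G] [Fintype G] [DecidableEq G]

def drX (f : Fin n → Fin n → G) : SimpleGraph (Fin n × G) :=
  SimpleGraph.fromRel (fun x y : Fin n × G => x.1 ≠ y.1 ∧ y.2 = x.2 * f x.1 y.1)

def Nw (f : Fin n → Fin n → G) (u v : Fin n) (g : G) : ℕ :=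
  (Finset.univ.filter (fun w : Fin n => w ≠ u ∧ w ≠ v ∧ f u w * f w v = g)).card

variable {f : Fin n → Fin n → G}

lemma adjiff (hsym : ∀ u v, f v u = (f u v)⁻¹) {u v : Fin n} {a b : G} :
    (drX f).Adj (u, a) (v, b) ↔ u ≠ v ∧ b = a * f u v := by
  constructor
  · rintro ⟨hne, h | h⟩
    · exact ⟨h.1, h.2⟩
    · refine ⟨Ne.symm h.1, ?_⟩
      have : a = b * f v u := h.2
      rw [this, hsym]; group
  · rintro ⟨hne, hb⟩
    refine ⟨?_, Or.inl ⟨hne, hb⟩⟩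
    simp only [ne_eq, Prod.mk.injEq, not_and]
    intro h; exact absurd h hne

lemma walk3_decomp {V : Type*} {X : SimpleGraph V} {x y : V} (p : X.Walk x y)
    (h : p.length = 3) : ∃ a b, X.Adj x a ∧ X.Adj a b ∧ X.Adj b y := by
  cases p with
  | nil => simp at h
  | cons h1 q =>
    cases q with
    | nil => simp at h
    | cons h2 q2 =>
      cases q2 with
      | nil => simp at h
      | cons h3 q3 =>
        have : q3.length = 0 := by simpa using h
        have := SimpleGraph.Walk.eq_of_length_eq_zero this
        subst this
        exact ⟨_, _, h1, h2, h3⟩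

lemma walk2_decomp {V : Type*} {X : SimpleGraph V} {x y : V} (p : X.Walk x y)
    (h : p.length = 2) : ∃ a, X.Adj x a ∧ X.Adj a y := by
  cases p with
  | nil => simp at h
  | cons h1 q =>
    cases q with
    | nil => simp at h
    | cons h2 q2 =>
      have : q2.length = 0 := by simpa using h
      have := SimpleGraph.Walk.eq_of_length_eq_zero this
      subst this
      exact ⟨_, h1, h2⟩

lemma Nw_pos_of_witness {u v w : Fin n} {g : G} (hwu : w ≠ u) (hwv : w ≠ v)
    (hg : f u w * f w v = g) : 0 < Nw f u v g := by
  apply Finset.card_pos.mpr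
  exact ⟨w, by simp [Nw, hwu, hwv, hg]⟩

/-- common neighbours of `(u,1)` and `(v,g)` are in bijection with `Nw` witnesses. -/
noncomputable def commonsEquiv (hsym : ∀ u v, f v u = (f u v)⁻¹) {u v : Fin n} {g : G}
    (huv : u ≠ v) :
    {w' : Fin n × G // (drX f).Adj (u, (1:G)) w' ∧ (drX f).Adj (v, g) w'} ≃
      {t : Fin n // t ≠ u ∧ t ≠ v ∧ f u t * f t v = g} where
  toFun := fun ⟨⟨t, s⟩, h1, h2⟩ => by
    rw [adjiff hsym] at h1 h2
    refine ⟨t, Ne.symm h1.1, Ne.symm h2.1, ?_⟩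
    have hs1 : s = f u t := by rw [h1.2]; group
    have hs2 : s = g * f v t := h2.2
    have : f u t = g * (f t v)⁻¹ := by rw [← hsym]; rw [← hs1, hs2]
    rw [this]; group
  invFun := fun ⟨t, h1, h2, h3⟩ =>
    ⟨(t, f u t), by
      constructor
      · rw [adjiff hsym]; exact ⟨Ne.symm h1, by group⟩
      · rw [adjiff hsym]
        refine ⟨Ne.symm h2, ?_⟩
        rw [← h3, hsym v t]; group⟩
  left_inv := by
    rintro ⟨⟨t, s⟩, h1, h2⟩
    have h1' := (adjiff hsym).mp h1
    apply Subtype.ext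
    show (t, f u t) = (t, s)
    rw [h1'.2, one_mul]
  right_inv := by
    rintro ⟨t, h1, h2, h3⟩
    rfl

lemma Nw_eq_c (hsym : ∀ u v, f v u = (f u v)⁻¹)
    (h4 : ∀ x y : Fin n × G, x ≠ y → (x.1 = y.1 ↔ (drX f).dist x y = 3))
    {c : ℕ}
    (h5 : ∀ x y : Fin n × G, (drX f).dist x y = 2 →
      Nat.card {w : Fin n × G // (drX f).Adj x w ∧ (drX f).Adj y w} = c)
    {u v : Fin n} {g : G} (huv : u ≠ v) (hgne : g ≠ f u v) (hpos : 0 < Nw f u v g) :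
    Nw f u v g = c := by
  obtain ⟨t, ht⟩ := Finset.card_pos.mp hpos
  simp only [Nw, Finset.mem_filter, Finset.mem_univ, true_and] at ht
  obtain ⟨htu, htv, htg⟩ := ht
  have a1 : (drX f).Adj (u, (1:G)) (t, f u t) := by
    rw [adjiff hsym]; exact ⟨Ne.symm htu, by group⟩
  have a2 : (drX f).Adj (t, f u t) (v, g) := by
    rw [adjiff hsym]; exact ⟨htv, by rw [← htg]⟩
  have hne : ((u, (1:G)) : Fin n × G) ≠ (v, g) := by
    simp only [ne_eq, Prod.mk.injEq, not_and]
    intro h; exact absurd h huv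
  have hdle : (drX f).dist (u, (1:G)) (v, g) ≤ 2 := by
    simpa using SimpleGraph.dist_le (.cons a1 (.cons a2 .nil))
  have hd0 : (drX f).dist (u, (1:G)) (v, g) ≠ 0 := by
    rw [SimpleGraph.dist_ne_zero_iff_ne_and_reachable]
    exact ⟨hne, ⟨.cons a1 (.cons a2 .nil)⟩⟩
  have hd1 : (drX f).dist (u, (1:G)) (v, g) ≠ 1 := by
    intro h1
    have := SimpleGraph.dist_eq_one_iff_adj.mp h1
    rw [adjiff hsym] at this
    exact hgne (by rw [this.2]; group)
  have hd2 : (drX f).dist (u, (1:G)) (v, g) = 2 := by omega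
  have := h5 _ _ hd2
  rw [Nat.card_congr (commonsEquiv hsym huv)] at this
  rw [Nat.card_eq_fintype_card, Fintype.card_subtype] at this
  rw [← this]
  rfl

lemma cpos (hsym : ∀ u v, f v u = (f u v)⁻¹)
    (h4 : ∀ x y : Fin n × G, x ≠ y → (x.1 = y.1 ↔ (drX f).dist x y = 3))
    {c : ℕ}
    (h5 : ∀ x y : Fin n × G, (drX f).dist x y = 2 →
      Nat.card {w : Fin n × G // (drX f).Adj x w ∧ (drX f).Adj y w} = c)
    (hG2 : Nontrivial G) (hn : 0 < n) : 0 < c := by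
  obtain ⟨h, hne1⟩ := exists_ne (1 : G)
  set u : Fin n := ⟨0, hn⟩
  have hxy : ((u, (1:G)) : Fin n × G) ≠ (u, h) := by
    simp [Ne.symm hne1]
  have hd3 : (drX f).dist (u, (1:G)) (u, h) = 3 := (h4 _ _ hxy).mp rfl
  obtain ⟨p, hp⟩ := SimpleGraph.exists_walk_of_dist_ne_zero (by rw [hd3]; omega)
  rw [hd3] at hp
  obtain ⟨A, B, hxa, hab, hby⟩ := walk3_decomp p hp
  have hdB2 : (drX f).dist (u, (1:G)) B = 2 := by
    have hle : (drX f).dist (u, (1:G)) B ≤ 2 := by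
      simpa using SimpleGraph.dist_le (.cons hxa (.cons hab .nil))
    have h0 : (drX f).dist (u, (1:G)) B ≠ 0 := by
      intro h0
      rcases SimpleGraph.dist_eq_zero_iff_eq_or_not_reachable.mp h0 with heq | hnr
      · rw [← heq] at hby
        have := SimpleGraph.dist_eq_one_iff_adj.mpr hby
        omega
      · exact hnr ⟨.cons hxa (.cons hab .nil)⟩
    have h1 : (drX f).dist (u, (1:G)) B ≠ 1 := by
      intro h1
      have hadj := SimpleGraph.dist_eq_one_iff_adj.mp h1
      have : (drX f).dist (u, (1:G)) (u, h) ≤ 2 := by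
        simpa using SimpleGraph.dist_le (.cons hadj (.cons hby .nil))
      omega
    omega
  have hc := h5 _ _ hdB2
  have : Nonempty {w : Fin n × G // (drX f).Adj (u, (1:G)) w ∧ (drX f).Adj B w} :=
    ⟨A, hxa, hab.symm⟩
  have := Nat.card_pos (α := {w : Fin n × G // (drX f).Adj (u, (1:G)) w ∧ (drX f).Adj B w})
  omega

lemma F4 (hsym : ∀ u v, f v u = (f u v)⁻¹)
    (h4 : ∀ x y : Fin n × G, x ≠ y → (x.1 = y.1 ↔ (drX f).dist x y = 3))
    {u : Fin n} {h : G} (hne1 : h ≠ 1) :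
    ∃ w z : Fin n, w ≠ u ∧ z ≠ u ∧ z ≠ w ∧ f u w * f w z * f z u = h := by
  have hxy : ((u, (1:G)) : Fin n × G) ≠ (u, h) := by simp [Ne.symm hne1]
  have hd3 : (drX f).dist (u, (1:G)) (u, h) = 3 := (h4 _ _ hxy).mp rfl
  obtain ⟨p, hp⟩ := SimpleGraph.exists_walk_of_dist_ne_zero (by rw [hd3]; omega)
  rw [hd3] at hp
  obtain ⟨⟨w, s1⟩, ⟨z, s2⟩, hxa, hab, hby⟩ := walk3_decomp p hp
  rw [adjiff hsym] at hxa hab hby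
  refine ⟨w, z, Ne.symm hxa.1, hby.1, Ne.symm hab.1, ?_⟩
  rw [hby.2, hab.2, hxa.2]; group

lemma chain (hsym : ∀ u v, f v u = (f u v)⁻¹)
    (h4 : ∀ x y : Fin n × G, x ≠ y → (x.1 = y.1 ↔ (drX f).dist x y = 3))
    {u v w z : Fin n} (huv : u ≠ v) (hwu : w ≠ u) (hzw : z ≠ w) (hzv : z ≠ v) :
    f u w * f w z * f z v = f u v ∨ 0 < Nw f u v (f u w * f w z * f z v) := by
  set g := f u w * f w z * f z v with hgdef
  have a1 : (drX f).Adj (u, (1 : G)) (w, f u w) := by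
    rw [adjiff hsym]; exact ⟨Ne.symm hwu, by group⟩
  have a2 : (drX f).Adj (w, f u w) (z, f u w * f w z) := by
    rw [adjiff hsym]; exact ⟨Ne.symm hzw, rfl⟩
  have a3 : (drX f).Adj (z, f u w * f w z) (v, g) := by
    rw [adjiff hsym]; exact ⟨hzv, by rw [hgdef]⟩
  have hne : ((u, (1:G)) : Fin n × G) ≠ (v, g) := by
    simp only [ne_eq, Prod.mk.injEq, not_and]
    intro h; exact absurd h huv
  have hdle : (drX f).dist (u, (1:G)) (v, g) ≤ 3 := by
    simpa using SimpleGraph.dist_le (.cons a1 (.cons a2 (.cons a3 .nil)))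
  have hd3 : (drX f).dist (u, (1:G)) (v, g) ≠ 3 := by
    intro h3
    exact huv ((h4 _ _ hne).mpr h3)
  have hd0 : (drX f).dist (u, (1:G)) (v, g) ≠ 0 := by
    rw [SimpleGraph.dist_ne_zero_iff_ne_and_reachable]
    exact ⟨hne, ⟨.cons a1 (.cons a2 (.cons a3 .nil))⟩⟩
  have hd12 : (drX f).dist (u, (1:G)) (v, g) = 1 ∨ (drX f).dist (u, (1:G)) (v, g) = 2 := by
    omega
  rcases hd12 with hd | hd
  · left
    have := SimpleGraph.dist_eq_one_iff_adj.mp hd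
    rw [adjiff hsym] at this
    rw [this.2]; group
  · right
    obtain ⟨p, hp⟩ := SimpleGraph.exists_walk_of_dist_ne_zero hd0
    rw [hd] at hp
    obtain ⟨⟨t, s⟩, hxa, hay⟩ := walk2_decomp p hp
    rw [adjiff hsym] at hxa hay
    obtain ⟨htu, hs⟩ := hxa
    obtain ⟨htv, hg2⟩ := hay
    exact Nw_pos_of_witness (Ne.symm htu) htv (by rw [hg2, hs]; group)


def Fse (f : Fin n → Fin n → G) (u v : Fin n) : Finset G :=
  Finset.univ.filter (fun g => g ≠ f u v ∧ Nw f u v g = 0)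

lemma mem_Fse {u v : Fin n} {g : G} :
    g ∈ Fse f u v ↔ g ≠ f u v ∧ Nw f u v g = 0 := by
  simp [Fse]

section Moves

variable (hsym : ∀ u v, f v u = (f u v)⁻¹)
variable (hchain : ∀ {u v w z : Fin n}, u ≠ v → w ≠ u → z ≠ w → z ≠ v →
    f u w * f w z * f z v = f u v ∨ 0 < Nw f u v (f u w * f w z * f z v))
include hsym hchain

lemma mv1sub {u v w : Fin n} (huv : u ≠ v) (hwu : w ≠ u) (hwv : w ≠ v)
    {g : G} (hg : g ∈ Fse f u v) : f w u * g ∈ Fse f w v := by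
  obtain ⟨hg1, hg2⟩ := mem_Fse.mp hg
  rw [mem_Fse]
  constructor
  · intro heq
    have : f u w * f w v = g := by
      have : g = (f w u)⁻¹ * f w v := by rw [← heq]; group
      rw [this, hsym u w]; group
    have := Nw_pos_of_witness hwu hwv this
    omega
  · by_contra hpos
    obtain ⟨z, hz⟩ := Finset.card_pos.mp (Nat.pos_of_ne_zero hpos)
    simp only [Nw, Finset.mem_filter, Finset.mem_univ, true_and] at hz
    obtain ⟨hzw, hzv, hzg⟩ := hz
    have hgval : f u w * f w z * f z v = g := by
      have := hzg
      calc f u w * f w z * f z v = f u w * (f w z * f z v) := by group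
        _ = f u w * (f w u * g) := by rw [hzg]
        _ = g := by rw [hsym u w]; group
    rcases hchain huv hwu hzw hzv with h | h
    · rw [hgval] at h; exact hg1 h
    · rw [hgval] at h; omega

lemma mv1 {u v w : Fin n} (huv : u ≠ v) (hwu : w ≠ u) (hwv : w ≠ v) :
    Fse f w v = (Fse f u v).image (fun g => f w u * g) := by
  ext g'
  constructor
  · intro hg'
    have h2 : f u w * g' ∈ Fse f u v := mv1sub hsym hchain hwv (Ne.symm hwu) huv hg'
    rw [Finset.mem_image]
    refine ⟨f u w * g', h2, ?_⟩
    rw [hsym u w]; group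
  · rw [Finset.mem_image]
    rintro ⟨g, hg, rfl⟩
    exact mv1sub hsym hchain huv hwu hwv hg

lemma mv2sub {u v w : Fin n} (huv : u ≠ v) (hwu : w ≠ u) (hwv : w ≠ v)
    {g : G} (hg : g ∈ Fse f u v) : g * f v w ∈ Fse f u w := by
  obtain ⟨hg1, hg2⟩ := mem_Fse.mp hg
  rw [mem_Fse]
  constructor
  · intro heq
    have : f u w * f w v = g := by
      have : g = f u w * (f v w)⁻¹ := by rw [← heq]; group
      rw [this, hsym v w]
    have := Nw_pos_of_witness hwu hwv this
    omega
  · by_contra hpos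
    obtain ⟨z, hz⟩ := Finset.card_pos.mp (Nat.pos_of_ne_zero hpos)
    simp only [Nw, Finset.mem_filter, Finset.mem_univ, true_and] at hz
    obtain ⟨hzu, hzw, hzg⟩ := hz
    have hgval : f u z * f z w * f w v = g := by
      calc f u z * f z w * f w v = (f u z * f z w) * f w v := by group
        _ = (g * f v w) * f w v := by rw [hzg]
        _ = g := by rw [hsym v w]; group
    rcases hchain huv hzu (Ne.symm hzw) hwv with h | h
    · rw [hgval] at h; exact hg1 h
    · rw [hgval] at h; omega

lemma mv2 {u v w : Fin n} (huv : u ≠ v) (hwu : w ≠ u) (hwv : w ≠ v) :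
    Fse f u w = (Fse f u v).image (fun g => g * f v w) := by
  ext g'
  constructor
  · intro hg'
    have h2 : g' * f w v ∈ Fse f u v := mv2sub hsym hchain (Ne.symm hwu) (Ne.symm huv) (Ne.symm hwv) hg'
    rw [Finset.mem_image]
    refine ⟨g' * f w v, h2, ?_⟩
    rw [hsym v w]; group
  · rw [Finset.mem_image]
    rintro ⟨g, hg, rfl⟩
    exact mv2sub hsym hchain huv hwu hwv hg

lemma mvinvsub {u v : Fin n} (huv : u ≠ v) {g : G} (hg : g ∈ Fse f u v) :
    g⁻¹ ∈ Fse f v u := by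
  obtain ⟨hg1, hg2⟩ := mem_Fse.mp hg
  rw [mem_Fse]
  constructor
  · intro heq
    apply hg1
    have : g = (f v u)⁻¹ := by rw [← heq]; group
    rw [this, hsym]; group
  · by_contra hpos
    obtain ⟨z, hz⟩ := Finset.card_pos.mp (Nat.pos_of_ne_zero hpos)
    simp only [Nw, Finset.mem_filter, Finset.mem_univ, true_and] at hz
    obtain ⟨hzv, hzu, hzg⟩ := hz
    have : f u z * f z v = g := by
      have : g = (f v z * f z u)⁻¹ := by rw [hzg]; group
      rw [this, hsym v z, hsym z u]; group
    have := Nw_pos_of_witness hzu hzv this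
    omega

lemma mvinv {u v : Fin n} (huv : u ≠ v) :
    Fse f v u = (Fse f u v).image (fun g => g⁻¹) := by
  ext g'
  constructor
  · intro hg'
    rw [Finset.mem_image]
    exact ⟨g'⁻¹, mvinvsub hsym hchain (Ne.symm huv) hg', by group⟩
  · rw [Finset.mem_image]
    rintro ⟨g, hg, rfl⟩
    exact mvinvsub hsym hchain huv hg

lemma card_mv1 {u v w : Fin n} (huv : u ≠ v) (hwu : w ≠ u) (hwv : w ≠ v) :
    (Fse f w v).card = (Fse f u v).card := by
  rw [mv1 hsym hchain huv hwu hwv]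
  exact Finset.card_image_of_injective _ (mul_right_injective _)

lemma card_mv2 {u v w : Fin n} (huv : u ≠ v) (hwu : w ≠ u) (hwv : w ≠ v) :
    (Fse f u w).card = (Fse f u v).card := by
  rw [mv2 hsym hchain huv hwu hwv]
  exact Finset.card_image_of_injective _ (mul_left_injective _)

lemma card_mvinv {u v : Fin n} (huv : u ≠ v) :
    (Fse f v u).card = (Fse f u v).card := by
  rw [mvinv hsym hchain huv]
  exact Finset.card_image_of_injective _ inv_injective

lemma card_const {u v x y : Fin n} (huv : u ≠ v) (hxy : x ≠ y) :
    (Fse f u v).card = (Fse f x y).card := by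
  by_cases hxu : x = u
  · subst hxu
    by_cases hyv : y = v
    · subst hyv; rfl
    · exact (card_mv2 hsym hchain huv (Ne.symm hxy) (fun h => hyv h)).symm
  · by_cases hxv : x = v
    · subst hxv
      rw [← card_mvinv hsym hchain huv]
      by_cases hyu : y = u
      · subst hyu; rfl
      · exact (card_mv2 hsym hchain (Ne.symm huv) (Ne.symm hxy) (fun h => hyu h)).symm
    · have h1 : (Fse f x v).card = (Fse f u v).card :=
        card_mv1 hsym hchain huv (fun h => hxu h) (fun h => hxv h)
      by_cases hyv : y = v
      · subst hyv; exact h1.symm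
      · have h2 : (Fse f x y).card = (Fse f x v).card :=
          card_mv2 hsym hchain (fun h => hxv h) (Ne.symm hxy) (fun h => hyv h)
        rw [h2, h1]

end Moves


lemma Nsum {u v : Fin n} (huv : u ≠ v) : (∑ g : G, Nw f u v g) + 2 = n := by
  classical
  set s : Finset (Fin n) := Finset.univ.filter (fun w => w ≠ u ∧ w ≠ v) with hs
  have h1 : s.card = ∑ g ∈ Finset.univ, (s.filter (fun w => f u w * f w v = g)).card :=
    Finset.card_eq_sum_card_fiberwise (fun w _ => Finset.mem_univ _)
  have h2 : ∀ g : G, Nw f u v g = (s.filter (fun w => f u w * f w v = g)).card := by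
    intro g
    rw [Nw, hs, Finset.filter_filter]
    congr 1
    ext w
    simp only [Finset.mem_filter, Finset.mem_univ, true_and]
    tauto
  have h3 : s.card + 2 = n := by
    have hpart := Finset.card_filter_add_card_filter_not
      (s := (Finset.univ : Finset (Fin n))) (p := fun w => w ≠ u ∧ w ≠ v)
    have hneg : Finset.univ.filter (fun w : Fin n => ¬(w ≠ u ∧ w ≠ v)) = {u, v} := by
      ext w
      simp only [Finset.mem_filter, Finset.mem_univ, true_and, Finset.mem_insert,
        Finset.mem_singleton]
      tauto
    rw [hneg, ← hs] at hpart
    have hcard2 : ({u, v} : Finset (Fin n)).card = 2 := by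
      rw [Finset.card_insert_of_notMem (by simp [huv]), Finset.card_singleton]
    have : (Finset.univ : Finset (Fin n)).card = n := by simp
    omega
  calc (∑ g : G, Nw f u v g) + 2 = (∑ g : G, (s.filter (fun w => f u w * f w v = g)).card) + 2 := by
        simp_rw [h2]
    _ = s.card + 2 := by rw [← h1]
    _ = n := h3

lemma fuv_not_mem_Fse {u v : Fin n} : f u v ∉ Fse f u v := by
  simp [Fse]

/-- the exact counting identity. -/
lemma count_key {c : ℕ}
    (hNc : ∀ {g : G}, g ≠ f u v → Nw f u v g ≠ 0 → Nw f u v g = c)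
    (huv : u ≠ v) :
    Nw f u v (f u v) +
      c * ((Finset.univ \ insert (f u v) (Fse f u v)).card) + 2 = n := by
  classical
  have hsplit : (∑ g ∈ Finset.univ \ insert (f u v) (Fse f u v), Nw f u v g) +
      (∑ g ∈ insert (f u v) (Fse f u v), Nw f u v g) = ∑ g : G, Nw f u v g :=
    Finset.sum_sdiff (Finset.subset_univ _)
  have hins : ∑ g ∈ insert (f u v) (Fse f u v), Nw f u v g = Nw f u v (f u v) := by
    rw [Finset.sum_insert fuv_not_mem_Fse]
    have : ∑ g ∈ Fse f u v, Nw f u v g = 0 := by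
      apply Finset.sum_eq_zero
      intro g hg
      exact ((Finset.mem_filter.mp hg).2).2
    omega
  have hrest : ∑ g ∈ Finset.univ \ insert (f u v) (Fse f u v), Nw f u v g =
      c * ((Finset.univ \ insert (f u v) (Fse f u v)).card) := by
    rw [Finset.sum_congr rfl (g := fun _ => c), Finset.sum_const, smul_eq_mul, mul_comm]
    intro g hg
    simp only [Finset.mem_sdiff, Finset.mem_univ, true_and, Finset.mem_insert, not_or] at hg
    obtain ⟨hg1, hg2⟩ := hg
    have : Nw f u v g ≠ 0 := by
      intro h0
      exact hg2 (by simp [Fse, hg1, h0])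
    exact hNc hg1 this
  have := Nsum (f := f) huv
  omega

lemma rpart {u v : Fin n} {r : ℕ} (hG : Fintype.card G = r) :
    (Finset.univ \ insert (f u v) (Fse f u v)).card + 1 + (Fse f u v).card = r := by
  classical
  have hsub : insert (f u v) (Fse f u v) ⊆ Finset.univ := Finset.subset_univ _
  have h1 := Finset.card_sdiff_of_subset hsub
  have h2 : (insert (f u v) (Fse f u v)).card = 1 + (Fse f u v).card := by
    rw [Finset.card_insert_of_notMem fuv_not_mem_Fse]; omega
  have h3 : (insert (f u v) (Fse f u v)).card ≤ (Finset.univ : Finset G).card :=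
    Finset.card_le_card hsub
  have h4 : (Finset.univ : Finset G).card = r := by rw [Finset.card_univ, hG]
  omega




lemma exists_functional (p : ℕ) [Fact p.Prime] (V : Type*) [AddCommGroup V]
    [Module (ZMod p) V] [Nontrivial V] :
    ∃ ψ : V →+ ZMod p, ∃ x : V, ψ x = 1 := by
  set B := Module.Basis.ofVectorSpace (ZMod p) V with hB
  obtain ⟨i⟩ := B.index_nonempty
  exact ⟨(B.coord i).toAddMonoidHom, B i, by simp⟩

lemma exists_phi {G : Type*} [CommGroup G] [Fintype G] (p : ℕ) (hp : p.Prime)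
    (hpr : p ∣ Fintype.card G) :
    ∃ φ : G → ZMod p, (∀ a b, φ (a * b) = φ a + φ b) ∧ (∀ t : ZMod p, ∃ g, φ g = t) := by
  classical
  haveI : Fact p.Prime := ⟨hp⟩
  haveI : NeZero p := ⟨hp.ne_zero⟩
  set K : Subgroup G := (powMonoidHom p : G →* G).range with hK
  have hQpow : ∀ x : G ⧸ K, x ^ p = 1 := by
    intro x
    induction x using QuotientGroup.induction_on with
    | H a =>
      rw [← QuotientGroup.mk_pow, QuotientGroup.eq_one_iff]
      exact ⟨a, rfl⟩
  have hQnt : Nontrivial (G ⧸ K) := by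
    obtain ⟨g, hg⟩ := exists_prime_orderOf_dvd_card p hpr
    by_contra hns
    rw [not_nontrivial_iff_subsingleton] at hns
    have hsurj : Function.Surjective (powMonoidHom p : G →* G) := by
      intro a
      have h1 : ((a : G ⧸ K)) = ((1 : G) : G ⧸ K) := Subsingleton.elim _ _
      rw [QuotientGroup.eq] at h1
      simp only [mul_one] at h1
      obtain ⟨b, hb⟩ := h1
      exact ⟨b⁻¹, by simpa [powMonoidHom] using congrArg (·⁻¹) hb⟩
    have hinj := Finite.injective_iff_surjective.mpr hsurj
    have hg1 : g = 1 := by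
      apply hinj
      show g ^ p = 1 ^ p
      rw [one_pow, ← hg, pow_orderOf_eq_one]
    rw [hg1, orderOf_one] at hg
    exact hp.one_lt.ne' hg.symm
  letI : Module (ZMod p) (Additive (G ⧸ K)) := AddCommGroup.zmodModule (by
    intro x
    calc p • x = Additive.ofMul (x.toMul ^ p) := (ofMul_pow p x.toMul).symm
      _ = Additive.ofMul 1 := by rw [hQpow]
      _ = 0 := rfl)
  haveI : Nontrivial (Additive (G ⧸ K)) := hQnt
  obtain ⟨ψ, x, hx⟩ := exists_functional p (Additive (G ⧸ K))
  obtain ⟨a, ha⟩ := QuotientGroup.mk_surjective (s := K) x.toMul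
  have hval : ψ (Additive.ofMul ((a : G ⧸ K))) = 1 := by
    rw [ha]; exact hx
  refine ⟨fun g => ψ (Additive.ofMul ((g : G ⧸ K))), ?_, ?_⟩
  · intro a' b'
    beta_reduce
    rw [show ((a' * b' : G) : G ⧸ K) = (a' : G ⧸ K) * (b' : G ⧸ K) from rfl, ofMul_mul,
      map_add]
  · intro t
    refine ⟨a ^ t.val, ?_⟩
    have : ((a ^ t.val : G) : G ⧸ K) = ((a : G ⧸ K)) ^ t.val := by
      rw [QuotientGroup.mk_pow]
    beta_reduce
    rw [this, ofMul_pow, map_nsmul, hval, nsmul_eq_mul, mul_one, ZMod.natCast_val,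
      ZMod.cast_id]



variable {p : ℕ} [Fact p.Prime]

def Φf (φ : G → ZMod p) (f : Fin n → Fin n → G) (u v : Fin n) : ZMod p :=
  ∑ g ∈ Fse f u v, φ g

lemma pick4 (hn4 : 4 ≤ n) (x y z : Fin n) : ∃ v : Fin n, v ≠ x ∧ v ≠ y ∧ v ≠ z := by
  have hcard : ({x, y, z} : Finset (Fin n)).card ≤ 3 := by
    apply le_trans (Finset.card_insert_le _ _)
    have := Finset.card_insert_le y ({z} : Finset (Fin n))
    simp only [Finset.card_singleton] at this ⊢
    omega
  have : ¬ (Finset.univ : Finset (Fin n)) ⊆ ({x, y, z} : Finset (Fin n)) := by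
    intro hsub
    have := Finset.card_le_card hsub
    simp only [Finset.card_univ, Fintype.card_fin] at this
    omega
  obtain ⟨v, _, hv⟩ := Finset.not_subset.mp this
  refine ⟨v, ?_, ?_, ?_⟩ <;>
    · intro h
      apply hv
      simp [h]


variable (φ : G → ZMod p)
variable (hadd : ∀ a b, φ (a * b) = φ a + φ b)
variable (hsym : ∀ u v, f v u = (f u v)⁻¹)

include hadd in
lemma phi_one : φ 1 = 0 := by
  have := hadd 1 1
  rw [mul_one] at this
  linear_combination -this

include hadd in
lemma phi_inv (g : G) : φ g⁻¹ = - φ g := by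
  have := hadd g⁻¹ g
  rw [inv_mul_cancel, phi_one φ hadd] at this
  linear_combination -this

include hadd hsym in
lemma phi_symm (u v : Fin n) : φ (f v u) = - φ (f u v) := by
  rw [hsym, phi_inv φ hadd]

include hadd hsym in
lemma phi_diag (htwo : (2 : ZMod p) ≠ 0) (u : Fin n) : φ (f u u) = 0 := by
  have h := phi_symm φ hadd hsym u u
  have h2 : (2 : ZMod p) * φ (f u u) = 0 := by linear_combination h
  rcases mul_eq_zero.mp h2 with h | h
  · exact absurd h htwo
  · exact h

include hadd in
lemma phi_sum_univ (htwo : (2 : ZMod p) ≠ 0) : ∑ g : G, φ g = 0 := by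
  have h1 : ∑ g : G, φ g⁻¹ = ∑ g : G, φ g :=
    Fintype.sum_equiv (Equiv.inv G) _ _ (fun x => rfl)
  have h2 : ∑ g : G, φ g⁻¹ = - ∑ g : G, φ g := by
    rw [← Finset.sum_neg_distrib]
    exact Finset.sum_congr rfl (fun g _ => phi_inv φ hadd g)
  have h3 : (2 : ZMod p) * (∑ g : G, φ g) = 0 := by
    rw [h2] at h1
    linear_combination -h1
  rcases mul_eq_zero.mp h3 with h | h
  · exact absurd h htwo
  · exact h

lemma Nw_eq_filter (u v : Fin n) (g : G) :
    Nw f u v g =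
      ((Finset.univ.filter (fun w : Fin n => w ≠ u ∧ w ≠ v)).filter
        (fun w => f u w * f w v = g)).card := by
  rw [Nw, Finset.filter_filter]
  congr 1
  ext w
  simp only [Finset.mem_filter, Finset.mem_univ, true_and]
  tauto

include hadd hsym in
/-- the fundamental mod-p identity for a pair. -/
lemma R1 {c : ℕ} (htwo : (2 : ZMod p) ≠ 0)
    (hNc : ∀ {g : G}, g ≠ f u v → Nw f u v g ≠ 0 → Nw f u v g = c)
    (huv : u ≠ v) :
    (∑ w : Fin n, φ (f u w)) - (∑ w : Fin n, φ (f v w)) - 2 * φ (f u v) =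
      (Nw f u v (f u v) : ZMod p) * φ (f u v)
        - (c : ZMod p) * φ (f u v) - (c : ZMod p) * Φf φ f u v := by
  classical
  set s : Finset (Fin n) := Finset.univ.filter (fun w => w ≠ u ∧ w ≠ v) with hs
  -- step 1: fiberwise sum
  have hfib : ∑ w ∈ s, φ (f u w * f w v) =
      ∑ g : G, (Nw f u v g : ZMod p) * φ g := by
    rw [← Finset.sum_fiberwise_of_maps_to (g := fun w : Fin n => f u w * f w v)
      (fun w _ => Finset.mem_univ _) (fun w => φ (f u w * f w v))]
    apply Finset.sum_congr rfl
    intro g _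
    have : ∑ w ∈ s.filter (fun w => f u w * f w v = g), φ (f u w * f w v) =
        ∑ w ∈ s.filter (fun w => f u w * f w v = g), φ g := by
      apply Finset.sum_congr rfl
      intro w hw
      rw [(Finset.mem_filter.mp hw).2]
    rw [this, Finset.sum_const, Nw_eq_filter, ← hs, nsmul_eq_mul]
  -- step 2: evaluate RHS of hfib by splitting over  insert (f u v) (Fse f u v)
  have hsplitG : (∑ g ∈ Finset.univ \ insert (f u v) (Fse f u v), (Nw f u v g : ZMod p) * φ g) +
      (∑ g ∈ insert (f u v) (Fse f u v), (Nw f u v g : ZMod p) * φ g) =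
      ∑ g : G, (Nw f u v g : ZMod p) * φ g :=
    Finset.sum_sdiff (Finset.subset_univ _)
  have hfuv_notmem : f u v ∉ Fse f u v := by simp [Fse]
  have hins : ∑ g ∈ insert (f u v) (Fse f u v), (Nw f u v g : ZMod p) * φ g =
      (Nw f u v (f u v) : ZMod p) * φ (f u v) := by
    rw [Finset.sum_insert hfuv_notmem]
    have : ∑ g ∈ Fse f u v, (Nw f u v g : ZMod p) * φ g = 0 := by
      apply Finset.sum_eq_zero
      intro g hg
      have : Nw f u v g = 0 := ((Finset.mem_filter.mp hg).2).2
      rw [this]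
      push_cast
      ring
    rw [this, add_zero]
  have hrest : ∑ g ∈ Finset.univ \ insert (f u v) (Fse f u v), (Nw f u v g : ZMod p) * φ g =
      (c : ZMod p) * ∑ g ∈ Finset.univ \ insert (f u v) (Fse f u v), φ g := by
    rw [Finset.mul_sum]
    apply Finset.sum_congr rfl
    intro g hg
    simp only [Finset.mem_sdiff, Finset.mem_univ, true_and, Finset.mem_insert, not_or] at hg
    obtain ⟨hg1, hg2⟩ := hg
    have hNw : Nw f u v g ≠ 0 := fun h0 => hg2 (by simp [Fse, hg1, h0])
    rw [hNc hg1 hNw]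
  have hsum_compl : ∑ g ∈ Finset.univ \ insert (f u v) (Fse f u v), φ g =
      - φ (f u v) - Φf φ f u v := by
    have h0 : (∑ g ∈ Finset.univ \ insert (f u v) (Fse f u v), φ g) +
        (∑ g ∈ insert (f u v) (Fse f u v), φ g) = ∑ g : G, φ g :=
      Finset.sum_sdiff (Finset.subset_univ _)
    rw [Finset.sum_insert hfuv_notmem] at h0
    rw [phi_sum_univ φ hadd htwo] at h0
    rw [show (∑ g ∈ Fse f u v, φ g) = Φf φ f u v from rfl] at h0
    linear_combination h0
  -- step 3: evaluate LHS of hfib directly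
  have hLHS : ∑ w ∈ s, φ (f u w * f w v) =
      (∑ w : Fin n, φ (f u w)) - (∑ w : Fin n, φ (f v w)) - 2 * φ (f u v) := by
    have hval : ∀ w ∈ s, φ (f u w * f w v) = φ (f u w) + φ (f w v) := fun w _ => hadd _ _
    rw [Finset.sum_congr rfl hval, Finset.sum_add_distrib]
    have hsplit1 : (∑ w ∈ s, φ (f u w)) + (∑ w ∈ ({u, v} : Finset (Fin n)), φ (f u w)) =
        ∑ w : Fin n, φ (f u w) := by
      have hseq : s = Finset.univ \ ({u, v} : Finset (Fin n)) := by
        ext w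
        simp only [hs, Finset.mem_filter, Finset.mem_univ, true_and, Finset.mem_sdiff,
          Finset.mem_insert, Finset.mem_singleton]
        tauto
      rw [hseq]
      exact Finset.sum_sdiff (Finset.subset_univ _)
    have hsplit2 : (∑ w ∈ s, φ (f w v)) + (∑ w ∈ ({u, v} : Finset (Fin n)), φ (f w v)) =
        ∑ w : Fin n, φ (f w v) := by
      have hseq : s = Finset.univ \ ({u, v} : Finset (Fin n)) := by
        ext w
        simp only [hs, Finset.mem_filter, Finset.mem_univ, true_and, Finset.mem_sdiff,
          Finset.mem_insert, Finset.mem_singleton]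
        tauto
      rw [hseq]
      exact Finset.sum_sdiff (Finset.subset_univ _)
    have hpair1 : ∑ w ∈ ({u, v} : Finset (Fin n)), φ (f u w) = φ (f u v) := by
      rw [Finset.sum_pair huv, phi_diag φ hadd hsym htwo]
      ring
    have hpair2 : ∑ w ∈ ({u, v} : Finset (Fin n)), φ (f w v) = φ (f u v) := by
      rw [Finset.sum_pair huv, phi_diag φ hadd hsym htwo]
      ring
    have hwv : ∑ w : Fin n, φ (f w v) = - ∑ w : Fin n, φ (f v w) := by
      rw [← Finset.sum_neg_distrib]
      exact Finset.sum_congr rfl (fun w _ => phi_symm φ hadd hsym v w)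
    have hwv' : ∑ w ∈ s, φ (f w v) = (∑ w : Fin n, φ (f w v)) - φ (f u v) := by
      linear_combination hsplit2 - hpair2
    rw [hwv'] at *
    have h1 : ∑ w ∈ s, φ (f u w) = (∑ w : Fin n, φ (f u w)) - φ (f u v) := by
      linear_combination hsplit1 - hpair1
    rw [h1, hwv]
    ring
  rw [hLHS] at hfib
  rw [← hsplitG, hins, hrest, hsum_compl] at hfib
  linear_combination hfib



section PhiMoves

variable (hchain : ∀ {u v w z : Fin n}, u ≠ v → w ≠ u → z ≠ w → z ≠ v →
    f u w * f w z * f z v = f u v ∨ 0 < Nw f u v (f u w * f w z * f z v))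
include hadd hsym hchain

lemma Phi_mv1 {u v w : Fin n} (huv : u ≠ v) (hwu : w ≠ u) (hwv : w ≠ v) :
    Φf φ f w v = ((Fse f u v).card : ZMod p) * φ (f w u) + Φf φ f u v := by
  rw [Φf, mv1 hsym hchain huv hwu hwv,
    Finset.sum_image (fun a _ b _ h => mul_left_cancel h)]
  have hc : ∀ g ∈ Fse f u v, φ (f w u * g) = φ (f w u) + φ g := fun g _ => hadd _ _
  rw [Finset.sum_congr rfl hc, Finset.sum_add_distrib, Finset.sum_const, nsmul_eq_mul]
  rfl

lemma Phi_mv2 {u v w : Fin n} (huv : u ≠ v) (hwu : w ≠ u) (hwv : w ≠ v) :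
    Φf φ f u w = Φf φ f u v + ((Fse f u v).card : ZMod p) * φ (f v w) := by
  rw [Φf, mv2 hsym hchain huv hwu hwv,
    Finset.sum_image (fun a _ b _ h => mul_right_cancel h)]
  have hc : ∀ g ∈ Fse f u v, φ (g * f v w) = φ g + φ (f v w) := fun g _ => hadd _ _
  rw [Finset.sum_congr rfl hc, Finset.sum_add_distrib, Finset.sum_const, nsmul_eq_mul]
  rfl

lemma Phi_inv {u v : Fin n} (huv : u ≠ v) :
    Φf φ f v u = - Φf φ f u v := by
  rw [Φf, mvinv hsym hchain huv,
    Finset.sum_image (fun a _ b _ h => inv_injective h)]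
  rw [Φf, ← Finset.sum_neg_distrib]
  exact Finset.sum_congr rfl (fun g _ => phi_inv φ hadd g)

end PhiMoves

end DracknAux


/-- **Odd primes dividing the index of an abelian drackn.** If `X` is an
abelian `(n,r,c)`-drackn (determined by a normalized arc function `f` with
values in an abelian group `G = ⟨f⟩` of order `r`), then every odd prime
dividing `r` also divides `n`. -/
theorem abelian_drackn_odd_prime_dvd (n r c : ℕ) (hn : 2 ≤ n) (hr : 2 ≤ r)
    (G : Type*) [CommGroup G] [Fintype G] (hG : Fintype.card G = r)
    (f : Fin n → Fin n → G)
    (hsym : ∀ u v, f v u = (f u v)⁻¹)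
    (hnorm : ∀ v, f ⟨0, by omega⟩ v = 1)
    (hgen : Subgroup.closure (Set.range fun p : Fin n × Fin n => f p.1 p.2) = ⊤)
    (hX : IsDracknCover
      (SimpleGraph.fromRel
        (fun x y : Fin n × G => x.1 ≠ y.1 ∧ y.2 = x.2 * f x.1 y.1))
      Prod.fst r c)
    (p : ℕ) (hp : p.Prime) (hpodd : Odd p) (hpr : p ∣ r) :
    p ∣ n := by
  classical
  letI : DecidableEq G := Classical.decEq G
  obtain ⟨-, -, -, h4, h5⟩ := hX
  have h4' : ∀ x y : Fin n × G, x ≠ y →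
      (x.1 = y.1 ↔ (DracknAux.drX f).dist x y = 3) := h4
  have h5' : ∀ x y : Fin n × G, (DracknAux.drX f).dist x y = 2 →
      Nat.card {w : Fin n × G // (DracknAux.drX f).Adj x w ∧ (DracknAux.drX f).Adj y w} = c :=
    h5
  haveI : Fact p.Prime := ⟨hp⟩
  have hp2 : p ≠ 2 := by
    rintro rfl
    simp [Nat.odd_iff] at hpodd
  have htwo : (2 : ZMod p) ≠ 0 := by
    intro h
    have h2 : ((2 : ℕ) : ZMod p) = 0 := by exact_mod_cast h
    have := (ZMod.natCast_eq_zero_iff 2 p).mp h2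
    have := (Nat.prime_dvd_prime_iff_eq hp Nat.prime_two).mp this
    exact hp2 this
  haveI hGnt : Nontrivial G := by
    apply Fintype.one_lt_card_iff_nontrivial.mp
    rw [hG]; omega
  have hchain : ∀ {u v w z : Fin n}, u ≠ v → w ≠ u → z ≠ w → z ≠ v →
      f u w * f w z * f z v = f u v ∨
        0 < DracknAux.Nw f u v (f u w * f w z * f z v) :=
    fun h1 h2 h3 h4'' => DracknAux.chain hsym h4' h1 h2 h3 h4''
  have hF4 : ∀ (u : Fin n) (h : G), h ≠ 1 →
      ∃ w z : Fin n, w ≠ u ∧ z ≠ u ∧ z ≠ w ∧ f u w * f w z * f z u = h :=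
    fun u h hne => DracknAux.F4 hsym h4' hne
  obtain ⟨h0, hh0⟩ := exists_ne (1 : G)
  -- small n cases
  by_cases hn23 : n ≤ 3
  · have hn23' : n = 2 ∨ n = 3 := by omega
    rcases hn23' with rfl | rfl
    · -- n = 2 : impossible
      exfalso
      obtain ⟨w, z, hwu, hzu, hzw, -⟩ := hF4 0 h0 hh0
      have hw : w.val ≠ 0 := fun h => hwu (Fin.val_injective h)
      have hz : z.val ≠ 0 := fun h => hzu (Fin.val_injective h)
      have hzw' : z.val ≠ w.val := fun h => hzw (Fin.val_injective h)
      have := w.isLt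
      have := z.isLt
      omega
    · -- n = 3
      have hsub : (Finset.univ : Finset G) ⊆
          {1, f 0 1 * f 1 2 * f 2 0, f 0 2 * f 2 1 * f 1 0} := by
        intro g _
        by_cases hg1 : g = 1
        · simp [hg1]
        obtain ⟨w, z, hwu, hzu, hzw, hT⟩ := hF4 0 g hg1
        have hw : w.val ≠ 0 := fun h => hwu (Fin.val_injective h)
        have hz : z.val ≠ 0 := fun h => hzu (Fin.val_injective h)
        have hzw' : z.val ≠ w.val := fun h => hzw (Fin.val_injective h)
        have hwlt := w.isLt
        have hzlt := z.isLt
        have hcases : (w.val = 1 ∧ z.val = 2) ∨ (w.val = 2 ∧ z.val = 1) := by omega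
        rcases hcases with ⟨hw1, hz2⟩ | ⟨hw2, hz1⟩
        · have hww : w = 1 := Fin.val_injective (by simp [hw1])
          have hzz : z = 2 := Fin.val_injective (by simp [hz2])
          subst hww; subst hzz
          simp only [Finset.mem_insert, Finset.mem_singleton]
          right; left; exact hT.symm
        · have hww : w = 2 := Fin.val_injective (by simp [hw2])
          have hzz : z = 1 := Fin.val_injective (by simp [hz1])
          subst hww; subst hzz
          simp only [Finset.mem_insert, Finset.mem_singleton]
          right; right; exact hT.symm
      have hr3 : r ≤ 3 := by
        have h1 := Finset.card_le_card hsub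
        have h2 : ({1, f 0 1 * f 1 2 * f 2 0, f 0 2 * f 2 1 * f 1 0} : Finset G).card ≤ 3 := by
          apply le_trans (Finset.card_insert_le _ _)
          have := Finset.card_insert_le (f 0 1 * f 1 2 * f 2 0)
            ({f 0 2 * f 2 1 * f 1 0} : Finset G)
          simp only [Finset.card_singleton] at this ⊢
          omega
        rw [Finset.card_univ, hG] at h1
        omega
      have hple : p ≤ r := Nat.le_of_dvd (by omega) hpr
      have hp3 : 3 ≤ p := by
        have := hp.two_le
        omega
      have : p = 3 := by omega
      rw [this]
  · -- main case : n ≥ 4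
    have hn4 : 4 ≤ n := by omega
    have hn0 : 0 < n := by omega
    obtain ⟨φ, hadd, hsurj⟩ := DracknAux.exists_phi (G := G) p hp (by rw [hG]; exact hpr)
    have hNc : ∀ {u v : Fin n}, u ≠ v → ∀ {g : G}, g ≠ f u v →
        DracknAux.Nw f u v g ≠ 0 → DracknAux.Nw f u v g = c :=
      fun {u v} huv {g} h1 h2 =>
        DracknAux.Nw_eq_c hsym h4' h5' huv h1 (Nat.pos_of_ne_zero h2)
    set u0 : Fin n := ⟨0, by omega⟩ with hu0
    set v0 : Fin n := ⟨1, by omega⟩ with hv0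
    have h01 : u0 ≠ v0 := by
      intro h
      have := congrArg Fin.val h
      simp [hu0, hv0] at this
    set M : ℕ := (DracknAux.Fse f u0 v0).card with hMdef
    have hmconst : ∀ {u v : Fin n}, u ≠ v → (DracknAux.Fse f u v).card = M :=
      fun {u v} huv => DracknAux.card_const hsym hchain huv h01
    have hckey : ∀ {u v : Fin n}, u ≠ v →
        DracknAux.Nw f u v (f u v) +
          c * ((Finset.univ \ insert (f u v) (DracknAux.Fse f u v)).card) + 2 = n :=
      fun {u v} huv => DracknAux.count_key (fun {g} => hNc huv) huv
    have hrp : ∀ u v : Fin n,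
        (Finset.univ \ insert (f u v) (DracknAux.Fse f u v)).card + 1 +
          (DracknAux.Fse f u v).card = r :=
      fun u v => DracknAux.rpart hG
    set Λ : ℕ := DracknAux.Nw f u0 v0 (f u0 v0) with hΛdef
    have hLamconst : ∀ {u v : Fin n}, u ≠ v → DracknAux.Nw f u v (f u v) = Λ := by
      intro u v huv
      have k1 := hckey huv
      have k0 := hckey h01
      have r1 := hrp u v
      have r0 := hrp u0 v0
      have hmm := hmconst huv
      have hsc : (Finset.univ \ insert (f u v) (DracknAux.Fse f u v)).card =
          (Finset.univ \ insert (f u0 v0) (DracknAux.Fse f u0 v0)).card := by omega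
      rw [hsc] at k1
      omega
    -- Φ-moves with the global constant M
    have hΦ1 : ∀ {u v w : Fin n}, u ≠ v → w ≠ u → w ≠ v →
        DracknAux.Φf φ f w v = (M : ZMod p) * φ (f w u) + DracknAux.Φf φ f u v := by
      intro u v w huv hwu hwv
      have := DracknAux.Phi_mv1 φ hadd hsym hchain huv hwu hwv
      rwa [hmconst huv] at this
    have hΦ2 : ∀ {u v w : Fin n}, u ≠ v → w ≠ u → w ≠ v →
        DracknAux.Φf φ f u w = DracknAux.Φf φ f u v + (M : ZMod p) * φ (f v w) := by
      intro u v w huv hwu hwv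
      have := DracknAux.Phi_mv2 φ hadd hsym hchain huv hwu hwv
      rwa [hmconst huv] at this
    have hΦinv : ∀ {u v : Fin n}, u ≠ v →
        DracknAux.Φf φ f v u = - DracknAux.Φf φ f u v :=
      fun {u v} huv => DracknAux.Phi_inv φ hadd hsym hchain huv
    -- R1 with global constants
    have hR1 : ∀ {u v : Fin n}, u ≠ v →
        (∑ w : Fin n, φ (f u w)) - (∑ w : Fin n, φ (f v w)) - 2 * φ (f u v) =
          (Λ : ZMod p) * φ (f u v) - (c : ZMod p) * φ (f u v)
            - (c : ZMod p) * DracknAux.Φf φ f u v := by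
      intro u v huv
      have := DracknAux.R1 φ hadd hsym htwo (fun {g} => hNc huv) huv
      rwa [hLamconst huv] at this
    -- the triangle identity
    have hT1 : ∀ {u v w : Fin n}, u ≠ v → v ≠ w → w ≠ u →
        ((Λ : ZMod p) + 2 - (c : ZMod p) + (c : ZMod p) * (M : ZMod p)) *
            (φ (f u v) + φ (f v w) + φ (f w u)) =
          (c : ZMod p) * ((M : ZMod p) * φ (f u v) - DracknAux.Φf φ f u v) := by
      intro u v w huv hvw hwu
      have e1 := hR1 huv
      have e2 := hR1 hvw
      have e3 := hR1 hwu
      have m1 : DracknAux.Φf φ f v w =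
          -((M : ZMod p) * φ (f w u) + DracknAux.Φf φ f u v) := by
        have q := hΦ1 huv hwu (Ne.symm hvw)
        have q2 := hΦinv (u := w) (v := v) (Ne.symm hvw)
        rw [q] at q2
        linear_combination q2
      have m2 : DracknAux.Φf φ f w u =
          -(DracknAux.Φf φ f u v + (M : ZMod p) * φ (f v w)) := by
        have q := hΦ2 huv hwu (Ne.symm hvw)
        have q2 := hΦinv (u := u) (v := w) (Ne.symm hwu)
        rw [q] at q2
        linear_combination q2
      linear_combination -e1 - e2 - e3 + (c : ZMod p) * m1 + (c : ZMod p) * m2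
    -- kappa relation
    have hrz : ((r : ℕ) : ZMod p) = 0 := (ZMod.natCast_eq_zero_iff r p).mpr hpr
    have hkn : (Λ : ZMod p) + 2 - (c : ZMod p) + (c : ZMod p) * (M : ZMod p) =
        (n : ZMod p) + 2 * (c : ZMod p) * (M : ZMod p) := by
      have k0 := hckey h01
      have r0 := hrp u0 v0
      have k0' := congrArg (fun t : ℕ => (t : ZMod p)) k0
      have r0' := congrArg (fun t : ℕ => (t : ZMod p)) r0
      push_cast at k0' r0'
      rw [hrz] at r0'
      rw [← hMdef] at r0'
      linear_combination k0' - (c : ZMod p) * r0'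
    suffices hfin : (n : ZMod p) = 0 by
      exact (ZMod.natCast_eq_zero_iff n p).mp hfin
    by_cases hMz : (M : ZMod p) = 0
    · -- far sets have size ≡ 0: constant-holonomy contradiction unless n ≡ 0
      by_contra hn0'
      set hh : Fin n → Fin n → ZMod p :=
        fun u v => (n : ZMod p)⁻¹ * (-((c : ZMod p) * DracknAux.Φf φ f u v)) with hhdef
      have hH : ∀ {u v w : Fin n}, u ≠ v → v ≠ w → w ≠ u →
          φ (f u v) + φ (f v w) + φ (f w u) = hh u v := by
        intro u v w huv hvw hwu
        have t := hT1 huv hvw hwu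
        rw [hkn, hMz] at t
        have t' : (n : ZMod p) * (φ (f u v) + φ (f v w) + φ (f w u)) =
            -((c : ZMod p) * DracknAux.Φf φ f u v) := by
          linear_combination t
        rw [hhdef]
        beta_reduce
        rw [← t', inv_mul_cancel_left₀ hn0']
      have hcyc : ∀ {u v w : Fin n}, u ≠ v → v ≠ w → w ≠ u → hh u v = hh v w := by
        intro u v w huv hvw hwu
        have h1 := hH huv hvw hwu
        have h2 := hH hvw hwu huv
        linear_combination h2 - h1
      have hconst1 : ∀ {a b c' : Fin n}, b ≠ a → c' ≠ a → hh a b = hh a c' := by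
        intro a b c' hba hca
        by_cases hbc : b = c'
        · rw [hbc]
        · obtain ⟨d, hd1, hd2, hd3⟩ := DracknAux.pick4 hn4 a b c'
          have e1 : hh d a = hh a b := hcyc hd1 (Ne.symm hba) (Ne.symm hd2)
          have e2 : hh d a = hh a c' := hcyc hd1 (Ne.symm hca) (Ne.symm hd3)
          rw [← e1, e2]
      obtain ⟨g1, hg1⟩ := hsurj 1
      obtain ⟨g2, hg2⟩ := hsurj 2
      have hg1ne : g1 ≠ 1 := by
        intro h
        rw [h, DracknAux.phi_one φ hadd] at hg1
        exact one_ne_zero hg1.symm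
      have hg2ne : g2 ≠ 1 := by
        intro h
        rw [h, DracknAux.phi_one φ hadd] at hg2
        exact htwo hg2.symm
      obtain ⟨w1, z1, hw1u, hz1u, hz1w, hT1g⟩ := hF4 u0 g1 hg1ne
      obtain ⟨w2, z2, hw2u, hz2u, hz2w, hT2g⟩ := hF4 u0 g2 hg2ne
      have hφT1 : φ (f u0 w1) + φ (f w1 z1) + φ (f z1 u0) = 1 := by
        rw [← hg1, ← hT1g, hadd, hadd]
      have hφT2 : φ (f u0 w2) + φ (f w2 z2) + φ (f z2 u0) = 2 := by
        rw [← hg2, ← hT2g, hadd, hadd]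
      have d1 : hh u0 w1 = 1 := by
        rw [← hH (Ne.symm hw1u) (Ne.symm hz1w) hz1u]
        exact hφT1
      have d2 : hh u0 w2 = 2 := by
        rw [← hH (Ne.symm hw2u) (Ne.symm hz2w) hz2u]
        exact hφT2
      have hd12 : hh u0 w1 = hh u0 w2 := hconst1 hw1u hw2u
      rw [d1, d2] at hd12
      have : (1 : ZMod p) = 0 := by linear_combination -hd12
      exact one_ne_zero this
    · -- M ≢ 0 : all triangle holonomies vanish, contradiction
      exfalso
      obtain ⟨g1, hg1⟩ := hsurj 1
      have hg1ne : g1 ≠ 1 := by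
        intro h
        rw [h, DracknAux.phi_one φ hadd] at hg1
        exact one_ne_zero hg1.symm
      obtain ⟨w1, z1, hw1u, hz1u, hz1w, hT1g⟩ := hF4 u0 g1 hg1ne
      obtain ⟨v, hv1, hv2, hv3⟩ := DracknAux.pick4 hn4 u0 w1 z1
      have q1 : DracknAux.Φf φ f u0 v =
          (M : ZMod p) * φ (f u0 w1) + DracknAux.Φf φ f w1 v :=
        hΦ1 (Ne.symm hv2) (Ne.symm hw1u) (Ne.symm hv1)
      have q2 : DracknAux.Φf φ f w1 v =
          (M : ZMod p) * φ (f w1 z1) + DracknAux.Φf φ f z1 v :=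
        hΦ1 (Ne.symm hv3) (Ne.symm hz1w) (Ne.symm hv2)
      have q3 : DracknAux.Φf φ f z1 v =
          (M : ZMod p) * φ (f z1 u0) + DracknAux.Φf φ f u0 v :=
        hΦ1 (Ne.symm hv1) hz1u (Ne.symm hv3)
      have hφT1 : φ (f u0 w1) + φ (f w1 z1) + φ (f z1 u0) = 1 := by
        rw [← hg1, ← hT1g, hadd, hadd]
      have hsum : (M : ZMod p) * (φ (f u0 w1) + φ (f w1 z1) + φ (f z1 u0)) = 0 := by
        linear_combination -q1 - q2 - q3
      rw [hφT1, mul_one] at hsum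
      exact hMz hsum
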